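/- Let x₁, x₂ > 0, λ > 0, and b̃₁₂, b̃₁₃, b̃₂₃, b̃₁₂₃ ≥ 0. The Laplace transform in x₃ of the measure [Γ(λ)]^{-1} x₃^{λ-1} F_{II}(λ, λ, b̃₁₃x₁x₃·b̃₂₃x₂x₃, b̃₁₂₃x₁x₂x₃, b̃₁₂x₁x₂, b̃₁₃x₁x₃ + b̃₂₃x₂x₃) 𝟙_{(0,∞)}(x₃) dx₃ at θ₃ > 0 (sufficiently large) equals θ₃^{-λ} exp((b̃₁₃x₁ + b̃₂₃x₂)/θ₃) · ₀F₁(;λ; (b̃₁₃b̃₂₃/θ₃² + b̃₁₂₃/θ₃ + b̃₁₂)x₁x₂), where F_{II}(λ₁,λ₂,z₁,z₂,z₃,z₄) = Σ_{m₁,…,m₄≥0} z₁^{m₁}z₂^{m₂}z₃^{m₃}z₄^{m₄} / ((λ₁)_{m₁+m₂+m₃}(λ₂)_{2m₁+m₂+m₄} m₁!m₂!m₃!m₄!). -/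

import Mathlib

open MeasureTheory Real Set

noncomputable def poch (a : ℝ) (n : ℕ) : ℝ := (ascPochhammer ℝ n).eval a

lemma poch_zero (a : ℝ) : poch a 0 = 1 := by simp [poch]

lemma poch_succ (a : ℝ) (n : ℕ) : poch a (n + 1) = poch a n * (a + n) := by
  simp [poch, ascPochhammer_succ_eval]

lemma poch_pos {a : ℝ} (ha : 0 < a) (n : ℕ) : 0 < poch a n :=
  ascPochhammer_pos n a ha

lemma poch_ge {a : ℝ} (ha : 0 < a) (n : ℕ) : min a 1 ^ n ≤ poch a n := by
  induction n with
  | zero => simp [poch_zero]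
  | succ n ih =>
    rw [poch_succ, pow_succ]
    have h1 : (0:ℝ) < min a 1 := lt_min ha one_pos
    have h2 : min a 1 ≤ a + n :=
      le_trans (min_le_left _ _) (le_add_of_nonneg_right (Nat.cast_nonneg n))
    exact mul_le_mul ih h2 h1.le (poch_pos ha n).le

lemma Gamma_add_nat {a : ℝ} (ha : 0 < a) (n : ℕ) :
    Real.Gamma (a + n) = Real.Gamma a * poch a n := by
  induction n with
  | zero => simp [poch_zero]
  | succ n ih =>
    have hne : a + n ≠ 0 := by positivity
    have : a + (n + 1 : ℕ) = (a + n) + 1 := by push_cast; ring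
    rw [this, Real.Gamma_add_one hne, ih, poch_succ]
    ring

lemma exp_tsum (x : ℝ) : Real.exp x = ∑' n : ℕ, x ^ n / n.factorial := by
  rw [Real.exp_eq_exp_ℝ, NormedSpace.exp_eq_tsum_div]

open Finset in
lemma antidiag_sum (t s : ℝ) (k : ℕ) :
    ∑ p ∈ Finset.HasAntidiagonal.antidiagonal k,
        t ^ p.1 * s ^ p.2 / (p.1.factorial * p.2.factorial)
      = (t + s) ^ k / k.factorial := by
  rw [Finset.Nat.sum_antidiagonal_eq_sum_range_succ_mk, add_pow, Finset.sum_div]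
  refine Finset.sum_congr rfl fun i hi => ?_
  have hik : i ≤ k := Nat.lt_succ_iff.mp (Finset.mem_range.mp hi)
  have h' : (k.choose i : ℝ) * i.factorial * (k - i).factorial = k.factorial := by
    exact_mod_cast congrArg Nat.cast (Nat.choose_mul_factorial_mul_factorial hik)
  have h1 : ((i.factorial : ℝ) * (k-i).factorial) ≠ 0 := by positivity
  have h2 : (k.factorial : ℝ) ≠ 0 := by positivity
  rw [div_eq_div_iff h1 h2]
  calc t ^ i * s ^ (k - i) * k.factorial
      = t ^ i * s ^ (k - i) * ((k.choose i : ℝ) * i.factorial * (k - i).factorial) := by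
        rw [h']
    _ = t ^ i * s ^ (k - i) * k.choose i * (i.factorial * (k - i).factorial) := by ring

lemma pair_tsum (t s : ℝ) (c : ℕ → ℝ)
    (h : Summable fun p : ℕ × ℕ =>
          t ^ p.1 * s ^ p.2 / (p.1.factorial * p.2.factorial) * c (p.1 + p.2)) :
    (∑' p : ℕ × ℕ, t ^ p.1 * s ^ p.2 / (p.1.factorial * p.2.factorial) * c (p.1 + p.2))
      = ∑' k : ℕ, (t + s) ^ k / k.factorial * c k := by
  set f : ℕ × ℕ → ℝ :=
    fun p => t ^ p.1 * s ^ p.2 / (p.1.factorial * p.2.factorial) * c (p.1 + p.2) with hf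
  rw [← Finset.HasAntidiagonal.sigmaAntidiagonalEquivProd.tsum_eq f]
  have hs : Summable fun x : Σ n : ℕ, (Finset.HasAntidiagonal.antidiagonal n : Finset (ℕ × ℕ)) =>
      f (Finset.HasAntidiagonal.sigmaAntidiagonalEquivProd x) :=
    Finset.HasAntidiagonal.sigmaAntidiagonalEquivProd.summable_iff.mpr h
  rw [Summable.tsum_sigma hs]
  refine tsum_congr fun k => ?_
  have : (∑' p : (Finset.HasAntidiagonal.antidiagonal k : Finset (ℕ × ℕ)),
      f (Finset.HasAntidiagonal.sigmaAntidiagonalEquivProd ⟨k, p⟩)) = ∑ p ∈ Finset.HasAntidiagonal.antidiagonal k, f p := by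
    rw [← Finset.tsum_subtype]
    rfl
  rw [this]
  have hcongr : ∀ p ∈ Finset.HasAntidiagonal.antidiagonal k,
      f p = t ^ p.1 * s ^ p.2 / (p.1.factorial * p.2.factorial) * c k := by
    intro p hp
    rw [Finset.HasAntidiagonal.mem_antidiagonal] at hp
    simp [hf, hp]
  rw [Finset.sum_congr rfl hcongr, ← Finset.sum_mul, antidiag_sum]

lemma pochpair_summable {lam : ℝ} (hlam : 0 < lam) (t s : ℝ) (ht : 0 ≤ t) (hs : 0 ≤ s) (j : ℕ) :
    Summable fun p : ℕ × ℕ =>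
      t ^ p.1 * s ^ p.2 / (p.1.factorial * p.2.factorial) * (1 / poch lam (j + (p.1 + p.2))) := by
  set μ := min lam 1 with hμ
  have hμ0 : 0 < μ := lt_min hlam one_pos
  have hb : Summable fun p : ℕ × ℕ =>
      ((t/μ) ^ p.1 / p.1.factorial) * ((s/μ) ^ p.2 / p.2.factorial * (1/μ^j)) := by
    apply Summable.mul_of_nonneg (Real.summable_pow_div_factorial (t/μ))
      ((Real.summable_pow_div_factorial (s/μ)).mul_right (1/μ^j))
      (fun n => by positivity) (fun n => by positivity)
  refine hb.of_nonneg_of_le (fun p => ?_) (fun p => ?_)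
  · exact mul_nonneg (by positivity) (one_div_pos.mpr (poch_pos hlam _)).le
  · have hpo : μ ^ (j + (p.1 + p.2)) ≤ poch lam (j + (p.1 + p.2)) := poch_ge hlam _
    calc t ^ p.1 * s ^ p.2 / (p.1.factorial * p.2.factorial) * (1 / poch lam (j + (p.1 + p.2)))
        ≤ t ^ p.1 * s ^ p.2 / (p.1.factorial * p.2.factorial) * (1 / μ ^ (j + (p.1 + p.2))) := by
          apply mul_le_mul_of_nonneg_left _ (by positivity)
          exact one_div_le_one_div_of_le (by positivity) hpo
      _ = ((t/μ) ^ p.1 / p.1.factorial) * ((s/μ) ^ p.2 / p.2.factorial * (1/μ^j)) := by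
          rw [pow_add, pow_add]
          ring

lemma quad_summable {lam : ℝ} (hlam : 0 < lam) {u v w r : ℝ}
    (hu : 0 ≤ u) (hv : 0 ≤ v) (hw : 0 ≤ w) (hr : 0 ≤ r) :
    Summable fun m : ℕ × ℕ × ℕ × ℕ =>
      u ^ m.1 * v ^ m.2.1 * w ^ m.2.2.1 * r ^ m.2.2.2 /
        (poch lam (m.1 + m.2.1 + m.2.2.1) * m.1.factorial * m.2.1.factorial *
          m.2.2.1.factorial * m.2.2.2.factorial) := by
  set μ := min lam 1 with hμ
  have hμ0 : 0 < μ := lt_min hlam one_pos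
  have h34 : Summable fun p : ℕ × ℕ =>
      ((w/μ) ^ p.1 / p.1.factorial) * (r ^ p.2 / p.2.factorial) := by
    apply Summable.mul_of_nonneg (Real.summable_pow_div_factorial (w/μ))
      (Real.summable_pow_div_factorial r) (fun n => by positivity) (fun n => by positivity)
  have h234 : Summable fun p : ℕ × (ℕ × ℕ) =>
      ((v/μ) ^ p.1 / p.1.factorial) *
        (((w/μ) ^ p.2.1 / p.2.1.factorial) * (r ^ p.2.2 / p.2.2.factorial)) := by
    apply Summable.mul_of_nonneg (Real.summable_pow_div_factorial (v/μ)) h34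
      (fun n => by positivity) (fun p => by positivity)
  have hb : Summable fun m : ℕ × ℕ × ℕ × ℕ =>
      ((u/μ) ^ m.1 / m.1.factorial) * (((v/μ) ^ m.2.1 / m.2.1.factorial) *
        (((w/μ) ^ m.2.2.1 / m.2.2.1.factorial) * (r ^ m.2.2.2 / m.2.2.2.factorial))) := by
    apply Summable.mul_of_nonneg (Real.summable_pow_div_factorial (u/μ)) h234
      (fun n => by positivity) (fun p => by positivity)
  refine hb.of_nonneg_of_le (fun m => ?_) (fun m => ?_)
  · have h0 : (0:ℝ) < poch lam (m.1 + m.2.1 + m.2.2.1) := poch_pos hlam _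
    positivity
  · have hpo : μ ^ (m.1 + m.2.1 + m.2.2.1) ≤ poch lam (m.1 + m.2.1 + m.2.2.1) :=
      poch_ge hlam _
    have h0 : (0:ℝ) < poch lam (m.1 + m.2.1 + m.2.2.1) := poch_pos hlam _
    calc u ^ m.1 * v ^ m.2.1 * w ^ m.2.2.1 * r ^ m.2.2.2 /
        (poch lam (m.1 + m.2.1 + m.2.2.1) * m.1.factorial * m.2.1.factorial *
          m.2.2.1.factorial * m.2.2.2.factorial)
        ≤ u ^ m.1 * v ^ m.2.1 * w ^ m.2.2.1 * r ^ m.2.2.2 /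
          (μ ^ (m.1 + m.2.1 + m.2.2.1) * m.1.factorial * m.2.1.factorial *
            m.2.2.1.factorial * m.2.2.2.factorial) := by
          gcongr
      _ = ((u/μ) ^ m.1 / m.1.factorial) * (((v/μ) ^ m.2.1 / m.2.1.factorial) *
          (((w/μ) ^ m.2.2.1 / m.2.2.1.factorial) * (r ^ m.2.2.2 / m.2.2.2.factorial))) := by
          rw [pow_add, pow_add]
          ring

lemma quad_tsum {lam : ℝ} (hlam : 0 < lam) {u v w r : ℝ}
    (hu : 0 ≤ u) (hv : 0 ≤ v) (hw : 0 ≤ w) (hr : 0 ≤ r) :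
    (∑' m : ℕ × ℕ × ℕ × ℕ,
        u ^ m.1 * v ^ m.2.1 * w ^ m.2.2.1 * r ^ m.2.2.2 /
          (poch lam (m.1 + m.2.1 + m.2.2.1) * m.1.factorial * m.2.1.factorial *
            m.2.2.1.factorial * m.2.2.2.factorial))
      = Real.exp r * (∑' k : ℕ, (u + v + w) ^ k / (poch lam k * k.factorial)) := by
  have hq := quad_summable hlam hu hv hw hr
  have hvw : (0:ℝ) ≤ v + w := by positivity
  have h23 : ∀ m1 : ℕ, Summable fun p : ℕ × ℕ =>
      v ^ p.1 * w ^ p.2 / (p.1.factorial * p.2.factorial) *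
        ((u ^ m1 / m1.factorial) * (1 / poch lam (m1 + (p.1 + p.2)))) := by
    intro m1
    apply ((pochpair_summable hlam v w hv hw m1).mul_left (u ^ m1 / m1.factorial)).congr
    intro p
    ring
  have hF : Summable fun q : ℕ × ℕ =>
      u ^ q.1 * (v + w) ^ q.2 / (q.1.factorial * q.2.factorial) * (1 / poch lam (q.1 + q.2)) := by
    apply (pochpair_summable hlam u (v + w) hu hvw 0).congr
    intro p
    rw [zero_add]
  have hT : (∑' (m1 : ℕ) (m2 : ℕ) (m3 : ℕ),
        u ^ m1 * v ^ m2 * w ^ m3 /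
          (poch lam (m1 + m2 + m3) * m1.factorial * m2.factorial * m3.factorial))
      = ∑' k : ℕ, (u + v + w) ^ k / (poch lam k * k.factorial) := by
    have step1 : ∀ m1 : ℕ, (∑' (m2 : ℕ) (m3 : ℕ),
          u ^ m1 * v ^ m2 * w ^ m3 /
            (poch lam (m1 + m2 + m3) * m1.factorial * m2.factorial * m3.factorial))
        = ∑' k : ℕ, (v + w) ^ k / k.factorial *
            ((u ^ m1 / m1.factorial) * (1 / poch lam (m1 + k))) := by
      intro m1
      calc (∑' (m2 : ℕ) (m3 : ℕ),
            u ^ m1 * v ^ m2 * w ^ m3 /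
              (poch lam (m1 + m2 + m3) * m1.factorial * m2.factorial * m3.factorial))
          = ∑' (m2 : ℕ) (m3 : ℕ), v ^ m2 * w ^ m3 / (m2.factorial * m3.factorial) *
              ((u ^ m1 / m1.factorial) * (1 / poch lam (m1 + (m2 + m3)))) := by
            refine tsum_congr fun m2 => tsum_congr fun m3 => ?_
            rw [add_assoc m1 m2 m3]
            ring
        _ = ∑' p : ℕ × ℕ, v ^ p.1 * w ^ p.2 / (p.1.factorial * p.2.factorial) *
              ((u ^ m1 / m1.factorial) * (1 / poch lam (m1 + (p.1 + p.2)))) :=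
            (Summable.tsum_prod (h23 m1)).symm
        _ = ∑' k : ℕ, (v + w) ^ k / k.factorial *
              ((u ^ m1 / m1.factorial) * (1 / poch lam (m1 + k))) :=
            pair_tsum v w (fun k => (u ^ m1 / m1.factorial) * (1 / poch lam (m1 + k))) (h23 m1)
    calc (∑' (m1 : ℕ) (m2 : ℕ) (m3 : ℕ),
          u ^ m1 * v ^ m2 * w ^ m3 /
            (poch lam (m1 + m2 + m3) * m1.factorial * m2.factorial * m3.factorial))
        = ∑' (m1 : ℕ) (k : ℕ), (v + w) ^ k / k.factorial *
            ((u ^ m1 / m1.factorial) * (1 / poch lam (m1 + k))) := tsum_congr step1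
      _ = ∑' (m1 : ℕ) (k : ℕ), u ^ m1 * (v + w) ^ k / (m1.factorial * k.factorial) *
            (1 / poch lam (m1 + k)) := by
          exact tsum_congr fun m1 => tsum_congr fun k => by ring
      _ = ∑' q : ℕ × ℕ, u ^ q.1 * (v + w) ^ q.2 / (q.1.factorial * q.2.factorial) *
            (1 / poch lam (q.1 + q.2)) := (Summable.tsum_prod hF).symm
      _ = ∑' k : ℕ, (u + (v + w)) ^ k / k.factorial * (1 / poch lam k) :=
          pair_tsum u (v + w) (fun k => 1 / poch lam k) hF
      _ = ∑' k : ℕ, (u + v + w) ^ k / (poch lam k * k.factorial) := by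
          refine tsum_congr fun k => ?_
          rw [← add_assoc]
          ring
  calc (∑' m : ℕ × ℕ × ℕ × ℕ,
        u ^ m.1 * v ^ m.2.1 * w ^ m.2.2.1 * r ^ m.2.2.2 /
          (poch lam (m.1 + m.2.1 + m.2.2.1) * m.1.factorial * m.2.1.factorial *
            m.2.2.1.factorial * m.2.2.2.factorial))
      = ∑' (m1 : ℕ) (q : ℕ × ℕ × ℕ),
          u ^ m1 * v ^ q.1 * w ^ q.2.1 * r ^ q.2.2 /
            (poch lam (m1 + q.1 + q.2.1) * m1.factorial * q.1.factorial *
              q.2.1.factorial * q.2.2.factorial) := Summable.tsum_prod hq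
    _ = ∑' (m1 : ℕ) (m2 : ℕ) (q : ℕ × ℕ),
          u ^ m1 * v ^ m2 * w ^ q.1 * r ^ q.2 /
            (poch lam (m1 + m2 + q.1) * m1.factorial * m2.factorial *
              q.1.factorial * q.2.factorial) :=
        tsum_congr fun m1 => Summable.tsum_prod (hq.prod_factor m1)
    _ = ∑' (m1 : ℕ) (m2 : ℕ) (m3 : ℕ) (m4 : ℕ),
          u ^ m1 * v ^ m2 * w ^ m3 * r ^ m4 /
            (poch lam (m1 + m2 + m3) * m1.factorial * m2.factorial *
              m3.factorial * m4.factorial) :=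
        tsum_congr fun m1 => tsum_congr fun m2 => Summable.tsum_prod ((hq.prod_factor m1).prod_factor m2)
    _ = ∑' (m1 : ℕ) (m2 : ℕ) (m3 : ℕ),
          (u ^ m1 * v ^ m2 * w ^ m3 /
            (poch lam (m1 + m2 + m3) * m1.factorial * m2.factorial * m3.factorial)) *
            Real.exp r := by
        refine tsum_congr fun m1 => tsum_congr fun m2 => tsum_congr fun m3 => ?_
        rw [exp_tsum, ← tsum_mul_left]
        exact tsum_congr fun m4 => by ring
    _ = (∑' (m1 : ℕ) (m2 : ℕ) (m3 : ℕ),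
          u ^ m1 * v ^ m2 * w ^ m3 /
            (poch lam (m1 + m2 + m3) * m1.factorial * m2.factorial * m3.factorial)) *
          Real.exp r := by
        simp only [tsum_mul_right]
    _ = Real.exp r * (∑' k : ℕ, (u + v + w) ^ k / (poch lam k * k.factorial)) := by
        rw [hT, mul_comm]

lemma integrableOn_exp_rpow {a r : ℝ} (ha : 0 < a) (hr : 0 < r) :
    IntegrableOn (fun x : ℝ => Real.exp (-(r * x)) * x ^ (a - 1)) (Ioi (0:ℝ)) := by
  have h0 : IntegrableOn (fun x : ℝ => Real.exp (-x) * x ^ (a - 1)) (Ioi (0:ℝ)) :=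
    Real.GammaIntegral_convergent ha
  have h1 : IntegrableOn (fun x : ℝ => Real.exp (-(r * x)) * (r * x) ^ (a - 1))
      (Ioi (0:ℝ)) := by
    have h2 := (integrableOn_Ioi_comp_mul_left_iff
      (fun x : ℝ => Real.exp (-x) * x ^ (a - 1)) 0 hr).mpr
    simpa [mul_zero] using h2 (by simpa [mul_zero] using h0)
  have hrp : (0:ℝ) < r ^ (a - 1) := Real.rpow_pos_of_pos hr _
  have h3 : IntegrableOn
      (fun x : ℝ => (r ^ (a - 1))⁻¹ * (Real.exp (-(r * x)) * (r * x) ^ (a - 1)))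
      (Ioi (0:ℝ)) := h1.const_mul _
  refine h3.congr_fun (fun x hx => ?_) measurableSet_Ioi
  rw [mem_Ioi] at hx
  beta_reduce
  rw [Real.mul_rpow hr.le hx.le]
  field_simp

lemma integrableOn_exp_rpow_pow {a r : ℝ} (ha : 0 < a) (hr : 0 < r) (n : ℕ) :
    IntegrableOn (fun x : ℝ => Real.exp (-(r * x)) * (x ^ (a - 1) * x ^ n)) (Ioi (0:ℝ)) := by
  refine IntegrableOn.congr_fun (integrableOn_exp_rpow (by positivity : (0:ℝ) < a + n) hr)
    (fun x hx => ?_) measurableSet_Ioi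
  rw [mem_Ioi] at hx
  rw [show a + (n:ℝ) - 1 = a - 1 + n by ring, Real.rpow_add hx, Real.rpow_natCast]

lemma laplace_rpow {a r : ℝ} (ha : 0 < a) (hr : 0 < r) (n : ℕ) :
    ∫ x in Ioi (0:ℝ), Real.exp (-(r * x)) * (x ^ (a - 1) * x ^ n)
      = (1 / r) ^ (a + n) * Real.Gamma (a + n) := by
  have h : ∀ x ∈ Ioi (0:ℝ), Real.exp (-(r * x)) * (x ^ (a - 1) * x ^ n)
      = x ^ ((a + n) - 1) * Real.exp (-(r * x)) := by
    intro x hx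
    rw [mem_Ioi] at hx
    rw [show a + (n:ℝ) - 1 = a - 1 + n by ring, Real.rpow_add hx, Real.rpow_natCast]
    ring
  rw [setIntegral_congr_fun measurableSet_Ioi h]
  exact integral_rpow_mul_exp_neg_mul_Ioi (by positivity) hr

/-- The confluent hypergeometric limit function `₀F₁(;λ;z)`. -/
noncomputable def F01 (b z : ℝ) : ℝ := ∑' k : ℕ, z ^ k / (poch b k * k.factorial)

/-- The generalized Lauricella function `F_II`. -/
noncomputable def FII (lam₁ lam₂ z₁ z₂ z₃ z₄ : ℝ) : ℝ :=
  ∑' m : ℕ × ℕ × ℕ × ℕ,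
    z₁ ^ m.1 * z₂ ^ m.2.1 * z₃ ^ m.2.2.1 * z₄ ^ m.2.2.2 /
      (poch lam₁ (m.1 + m.2.1 + m.2.2.1) * poch lam₂ (2 * m.1 + m.2.1 + m.2.2.2) *
        m.1.factorial * m.2.1.factorial * m.2.2.1.factorial * m.2.2.2.factorial)

theorem laplace_of_FII (x₁ x₂ lam tb₁₂ tb₁₃ tb₂₃ tb₁₂₃ : ℝ)
    (hx₁ : 0 < x₁) (hx₂ : 0 < x₂) (hlam : 0 < lam)
    (hb₁₂ : 0 ≤ tb₁₂) (hb₁₃ : 0 ≤ tb₁₃) (hb₂₃ : 0 ≤ tb₂₃) (hb₁₂₃ : 0 ≤ tb₁₂₃) :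
    ∃ s₀ : ℝ, 0 < s₀ ∧ ∀ θ₃ : ℝ, s₀ < θ₃ →
      ∫ x₃ in Ioi (0:ℝ),
          Real.exp (-(θ₃ * x₃)) * ((Real.Gamma lam)⁻¹ * x₃ ^ (lam - 1) *
            FII lam lam (tb₁₃ * x₁ * x₃ * (tb₂₃ * x₂ * x₃)) (tb₁₂₃ * x₁ * x₂ * x₃)
              (tb₁₂ * x₁ * x₂) (tb₁₃ * x₁ * x₃ + tb₂₃ * x₂ * x₃)) =
        θ₃ ^ (-lam) * Real.exp ((tb₁₃ * x₁ + tb₂₃ * x₂) / θ₃) *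
          F01 lam ((tb₁₃ * tb₂₃ / θ₃ ^ 2 + tb₁₂₃ / θ₃ + tb₁₂) * x₁ * x₂) := by
  refine ⟨1, one_pos, fun θ hθ => ?_⟩
  have hθ0 : (0:ℝ) < θ := lt_trans one_pos hθ
  set A := tb₁₃ * x₁ with hA
  set B := tb₂₃ * x₂ with hB
  set C := tb₁₂₃ * x₁ * x₂ with hC
  set D := tb₁₂ * x₁ * x₂ with hD
  have hA0 : 0 ≤ A := by rw [hA]; positivity
  have hB0 : 0 ≤ B := by rw [hB]; positivity
  have hC0 : 0 ≤ C := by rw [hC]; positivity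
  have hD0 : 0 ≤ D := by rw [hD]; positivity
  set u := A * B / θ ^ 2 with hu
  set v := C / θ with hv
  set w := D with hw
  set rr := (A + B) / θ with hrr
  have hu0 : 0 ≤ u := by rw [hu]; positivity
  have hv0 : 0 ≤ v := by rw [hv]; positivity
  have hw0 : 0 ≤ w := hD0
  have hrr0 : 0 ≤ rr := by rw [hrr]; positivity
  have hΓlam : (0:ℝ) < Real.Gamma lam := Real.Gamma_pos_of_pos hlam
  set K : ℕ × ℕ × ℕ × ℕ → ℝ := fun m =>
    (A * B) ^ m.1 * C ^ m.2.1 * D ^ m.2.2.1 * (A + B) ^ m.2.2.2 /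
      (poch lam (m.1 + m.2.1 + m.2.2.1) * poch lam (2 * m.1 + m.2.1 + m.2.2.2) *
        m.1.factorial * m.2.1.factorial * m.2.2.1.factorial * m.2.2.2.factorial) with hK
  set f : ℕ × ℕ × ℕ × ℕ → ℝ → ℝ := fun m x =>
    (Real.Gamma lam)⁻¹ * K m *
      (Real.exp (-(θ * x)) * (x ^ (lam - 1) * x ^ (2 * m.1 + m.2.1 + m.2.2.2))) with hf
  set g : ℕ × ℕ × ℕ × ℕ → ℝ := fun m =>
    u ^ m.1 * v ^ m.2.1 * w ^ m.2.2.1 * rr ^ m.2.2.2 /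
      (poch lam (m.1 + m.2.1 + m.2.2.1) * m.1.factorial * m.2.1.factorial *
        m.2.2.1.factorial * m.2.2.2.factorial) with hg
  have hg0 : ∀ m, 0 ≤ g m := by
    intro m
    rw [hg]
    have := poch_pos hlam (m.1 + m.2.1 + m.2.2.1)
    positivity
  have hgsum : Summable g := quad_summable hlam hu0 hv0 hw0 hrr0
  have hpt : ∀ x : ℝ,
      Real.exp (-(θ * x)) * ((Real.Gamma lam)⁻¹ * x ^ (lam - 1) *
        FII lam lam (A * x * (B * x)) (C * x) D (A * x + B * x))
      = ∑' m : ℕ × ℕ × ℕ × ℕ, f m x := by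
    intro x
    rw [FII, ← tsum_mul_left, ← tsum_mul_left]
    refine tsum_congr fun m => ?_
    rw [show (A * x + B * x) ^ m.2.2.2 = (A + B) ^ m.2.2.2 * x ^ m.2.2.2 by rw [← mul_pow]; ring]
    simp only [hf, hK]
    ring
  have hint : ∀ m, IntegrableOn (f m) (Ioi (0:ℝ)) := by
    intro m
    simp only [hf]
    exact Integrable.const_mul (integrableOn_exp_rpow_pow hlam hθ0 _) _
  have hnn : ∀ m, ∀ x ∈ Ioi (0:ℝ), 0 ≤ f m x := by
    intro m x hx
    rw [mem_Ioi] at hx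
    have hKm : 0 ≤ K m := by
      rw [hK]
      have h1 := poch_pos hlam (m.1 + m.2.1 + m.2.2.1)
      have h2 := poch_pos hlam (2 * m.1 + m.2.1 + m.2.2.2)
      have h3 : 0 ≤ A + B := by positivity
      have h4 : 0 ≤ A * B := by positivity
      positivity
    simp only [hf]
    have h5 : (0:ℝ) ≤ x ^ (lam - 1) := Real.rpow_nonneg hx.le _
    positivity
  have hval : ∀ m, ∫ x in Ioi (0:ℝ), f m x = (1 / θ) ^ lam * g m := by
    intro m
    simp only [hf]
    rw [MeasureTheory.integral_const_mul, laplace_rpow hlam hθ0]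
    rw [Gamma_add_nat hlam, Real.rpow_add (by positivity), Real.rpow_natCast]
    simp only [hK, hg]
    have h1 : poch lam (m.1 + m.2.1 + m.2.2.1) ≠ 0 := (poch_pos hlam _).ne'
    have h2 : poch lam (2 * m.1 + m.2.1 + m.2.2.2) ≠ 0 := (poch_pos hlam _).ne'
    have h3 : (m.1.factorial : ℝ) ≠ 0 := by positivity
    have h4 : (m.2.1.factorial : ℝ) ≠ 0 := by positivity
    have h5 : (m.2.2.1.factorial : ℝ) ≠ 0 := by positivity
    have h6 : (m.2.2.2.factorial : ℝ) ≠ 0 := by positivity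
    have hθne : θ ≠ 0 := hθ0.ne'
    rw [hu, hv, hw, hrr]
    simp only [div_pow]
    field_simp
    ring
  have hlint : (∑' m : ℕ × ℕ × ℕ × ℕ, ∫⁻ x in Ioi (0:ℝ), ‖f m x‖₊) ≠ ⊤ := by
    have heq : ∀ m : ℕ × ℕ × ℕ × ℕ,
        (∫⁻ x in Ioi (0:ℝ), ‖f m x‖₊) = ENNReal.ofReal ((1 / θ) ^ lam * g m) := by
      intro m
      rw [show (∫⁻ x in Ioi (0:ℝ), (‖f m x‖₊ : ENNReal)) = ∫⁻ x in Ioi (0:ℝ), ‖f m x‖ₑ from rfl, ← ofReal_integral_norm_eq_lintegral_enorm (hint m)]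
      congr 1
      rw [show (∫ x in Ioi (0:ℝ), ‖f m x‖)
          = ∫ x in Ioi (0:ℝ), f m x from
        setIntegral_congr_fun measurableSet_Ioi fun x hx => Real.norm_of_nonneg (hnn m x hx)]
      exact hval m
    rw [tsum_congr heq,
      ← ENNReal.ofReal_tsum_of_nonneg (fun m => mul_nonneg (by positivity) (hg0 m))
        (hgsum.mul_left _)]
    exact ENNReal.ofReal_ne_top
  calc (∫ x in Ioi (0:ℝ),
        Real.exp (-(θ * x)) * ((Real.Gamma lam)⁻¹ * x ^ (lam - 1) *
          FII lam lam (A * x * (B * x)) (C * x) D (A * x + B * x)))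
      = ∫ x in Ioi (0:ℝ), ∑' m : ℕ × ℕ × ℕ × ℕ, f m x :=
        setIntegral_congr_fun measurableSet_Ioi fun x _ => hpt x
    _ = ∑' m : ℕ × ℕ × ℕ × ℕ, ∫ x in Ioi (0:ℝ), f m x :=
        integral_tsum (fun m => (hint m).aestronglyMeasurable) hlint
    _ = ∑' m : ℕ × ℕ × ℕ × ℕ, (1 / θ) ^ lam * g m := tsum_congr hval
    _ = (1 / θ) ^ lam * ∑' m : ℕ × ℕ × ℕ × ℕ, g m := tsum_mul_left
    _ = (1 / θ) ^ lam *
          (Real.exp rr * ∑' k : ℕ, (u + v + w) ^ k / (poch lam k * k.factorial)) := by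
        rw [hg, quad_tsum hlam hu0 hv0 hw0 hrr0]
    _ = θ ^ (-lam) * Real.exp ((A + B) / θ) *
          F01 lam ((tb₁₃ * tb₂₃ / θ ^ 2 + tb₁₂₃ / θ + tb₁₂) * x₁ * x₂) := by
        have harg : (tb₁₃ * tb₂₃ / θ ^ 2 + tb₁₂₃ / θ + tb₁₂) * x₁ * x₂ = u + v + w := by
          rw [hu, hv, hD, hA, hB, hC]
          ring
        rw [harg, F01, one_div, Real.inv_rpow hθ0.le, ← Real.rpow_neg hθ0.le, hrr]
        ring
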